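/- Let u, v ∈ ℍ^{n+1} be null vectors with ⟨u,v⟩ = −1, let t, k ∈ ℝ, and set z = u e^{t/2} + v e^{−t/2} and w = u e^{k/2} + v e^{−k/2}. Then z and w are negative vectors with ⟨z,z⟩ = ⟨w,w⟩ = −2, the quaternionic cross-ratio 𝕏(z,u,w,v) equals the real number 1 + e^{k−t}, and the Bergman distance ρ(z,w) satisfies ρ(z,w) = |t − k| = |log(𝕏(z,u,w,v) − 1)|. -/
import Mathlib


open scoped Quaternion

noncomputable section

/-- The quaternionic Hermitian form of signature (n,1) on ℍ^{n+1}: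
`⟨z,w⟩ = w̄₁ z_{n+1} + Σ_{i=2}^n w̄ᵢ zᵢ + w̄_{n+1} z₁`. -/
noncomputable def herm {n : ℕ} (z w : Fin (n+1) → ℍ[ℝ]) : ℍ[ℝ] :=
  star (w 0) * z (Fin.last n)
    + ∑ i ∈ Finset.Ioo (0 : Fin (n+1)) (Fin.last n), star (w i) * z i
    + star (w (Fin.last n)) * z 0

/-- `w` is (right-)proportional to `z`: `w = zλ` for some `λ ∈ ℍ`. -/
def Prp {n : ℕ} (z w : Fin (n+1) → ℍ[ℝ]) : Prop :=
  ∃ lam : ℍ[ℝ], w = fun i => z i * lam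

/-- Right scalar multiplication on ℍ^{n+1}. -/
noncomputable def smulR {n : ℕ} (z : Fin (n+1) → ℍ[ℝ]) (lam : ℍ[ℝ]) :
    Fin (n+1) → ℍ[ℝ] := fun i => z i * lam

/-- The quaternionic triple product `⟨p₁,p₂,p₃⟩ = ⟨p₂,p₁⟩⟨p₃,p₂⟩⟨p₁,p₃⟩`. -/
noncomputable def tri {n : ℕ} (p₁ p₂ p₃ : Fin (n+1) → ℍ[ℝ]) : ℍ[ℝ] :=
  herm p₂ p₁ * herm p₃ p₂ * herm p₁ p₃

/-- The quaternionic Cartan angular invariant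
`𝔸(p₁,p₂,p₃) = arccos(Re(−⟨p₁,p₂,p₃⟩)/|⟨p₁,p₂,p₃⟩|)`. -/
noncomputable def cartan {n : ℕ} (p₁ p₂ p₃ : Fin (n+1) → ℍ[ℝ]) : ℝ :=
  Real.arccos ((-(tri p₁ p₂ p₃)).re / ‖tri p₁ p₂ p₃‖)

/-- The quaternionic cross-ratio `𝕏(p₁,p₂,p₃,p₄) = ⟨p₃,p₁⟩⟨p₃,p₂⟩⁻¹⟨p₄,p₂⟩⟨p₄,p₁⟩⁻¹`. -/
noncomputable def crossX {n : ℕ} (p₁ p₂ p₃ p₄ : Fin (n+1) → ℍ[ℝ]) : ℍ[ℝ] :=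
  herm p₃ p₁ * (herm p₃ p₂)⁻¹ * herm p₄ p₂ * (herm p₄ p₁)⁻¹

/-- The group Sp(n,1) of quaternionic matrices preserving the Hermitian form. -/
def SpGrp (n : ℕ) : Set (Matrix (Fin (n+1)) (Fin (n+1)) ℍ[ℝ]) :=
  {g | ∀ z w : Fin (n+1) → ℍ[ℝ], herm (g.mulVec z) (g.mulVec w) = herm z w}

/-- Similarity of quaternions: `b = μ a μ⁻¹` for some nonzero `μ`. -/
def QSim (a b : ℍ[ℝ]) : Prop := ∃ mu : ℍ[ℝ], mu ≠ 0 ∧ b = mu * a * mu⁻¹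

/-- Inverse hyperbolic cosine. -/
noncomputable def arcosh (x : ℝ) : ℝ := Real.log (x + Real.sqrt (x^2 - 1))

/-- Bergman distance between (negative) vectors:
`ρ(z,w) = 2 arccosh √(|⟨z,w⟩|²/(⟨z,z⟩⟨w,w⟩))`. -/
noncomputable def rho {n : ℕ} (z w : Fin (n+1) → ℍ[ℝ]) : ℝ :=
  2 * arcosh (Real.sqrt (‖herm z w‖^2 / ((herm z z).re * (herm w w).re)))

lemma herm_conj' {n : ℕ} (z w : Fin (n+1) → ℍ[ℝ]) : herm w z = star (herm z w) := by
  simp only [herm, star_add, star_sum, star_mul, star_star]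
  abel

lemma herm_exp' {n : ℕ} (a b w : Fin (n+1) → ℍ[ℝ]) (r s : ℝ) :
    herm (fun i => a i * ((r : ℝ) : ℍ[ℝ]) + b i * ((s : ℝ) : ℍ[ℝ])) w
      = herm a w * ((r : ℝ) : ℍ[ℝ]) + herm b w * ((s : ℝ) : ℍ[ℝ]) := by
  simp only [herm, mul_add, Finset.sum_add_distrib, add_mul, Finset.sum_mul, mul_assoc]
  abel

lemma arcosh_exp' (x : ℝ) (hx : 0 ≤ x) :
    Real.log ((Real.exp x + Real.exp (-x))/2
      + Real.sqrt (((Real.exp x + Real.exp (-x))/2)^2 - 1)) = x := by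
  have h1 : Real.exp x * Real.exp (-x) = 1 := by rw [← Real.exp_add]; simp
  have h2 : ((Real.exp x + Real.exp (-x))/2)^2 - 1
      = ((Real.exp x - Real.exp (-x))/2)^2 := by nlinarith [h1]
  have h3 : Real.exp (-x) ≤ Real.exp x := Real.exp_le_exp.2 (by linarith)
  rw [h2, Real.sqrt_sq (by linarith)]
  have h4 : (Real.exp x + Real.exp (-x))/2 + (Real.exp x - Real.exp (-x))/2
      = Real.exp x := by ring
  rw [h4, Real.log_exp]

/-- points on the geodesic with null endpoints `u,v`, `⟨u,v⟩ = -1`: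
`z = u e^{t/2} + v e^{-t/2}` and `w = u e^{k/2} + v e^{-k/2}` satisfy `⟨z,z⟩ = ⟨w,w⟩ = -2`,
`𝕏(z,u,w,v) = 1 + e^{k-t}` and `ρ(z,w) = |t-k| = |log(𝕏(z,u,w,v)-1)|`. -/
theorem stmt7 {n : ℕ} (hn : 2 ≤ n) (u v : Fin (n+1) → ℍ[ℝ])
    (hu : u ≠ 0) (hv : v ≠ 0) (huu : herm u u = 0) (hvv : herm v v = 0)
    (huv : herm u v = -1) (t k : ℝ) (z w : Fin (n+1) → ℍ[ℝ])
    (hz : z = fun i => u i * ((Real.exp (t/2) : ℝ) : ℍ[ℝ])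
                + v i * ((Real.exp (-t/2) : ℝ) : ℍ[ℝ]))
    (hw : w = fun i => u i * ((Real.exp (k/2) : ℝ) : ℍ[ℝ])
                + v i * ((Real.exp (-k/2) : ℝ) : ℍ[ℝ])) :
    herm z z = ((-2 : ℝ) : ℍ[ℝ]) ∧ herm w w = ((-2 : ℝ) : ℍ[ℝ])
    ∧ crossX z u w v = ((1 + Real.exp (k - t) : ℝ) : ℍ[ℝ])
    ∧ rho z w = |t - k| ∧ |t - k| = |Real.log ((crossX z u w v - 1).re)| := by
  have expne : ∀ a : ℝ, Real.exp a ≠ 0 := fun a => (Real.exp_pos a).ne'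
  have hvu : herm v u = -1 := by rw [herm_conj' u v, huv]; simp
  have hzu : herm z u = ((-Real.exp (-t/2) : ℝ) : ℍ[ℝ]) := by
    rw [hz, herm_exp', huu, hvu]; push_cast; simp
  have hzv : herm z v = ((-Real.exp (t/2) : ℝ) : ℍ[ℝ]) := by
    rw [hz, herm_exp', huv, hvv]; push_cast; simp
  have hwu : herm w u = ((-Real.exp (-k/2) : ℝ) : ℍ[ℝ]) := by
    rw [hw, herm_exp', huu, hvu]; push_cast; simp
  have hwv : herm w v = ((-Real.exp (k/2) : ℝ) : ℍ[ℝ]) := by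
    rw [hw, herm_exp', huv, hvv]; push_cast; simp
  have huz : herm u z = ((-Real.exp (-t/2) : ℝ) : ℍ[ℝ]) := by
    rw [herm_conj', hzu, Quaternion.star_coe]
  have hvz : herm v z = ((-Real.exp (t/2) : ℝ) : ℍ[ℝ]) := by
    rw [herm_conj', hzv, Quaternion.star_coe]
  have hzz : herm z z = ((-2 : ℝ) : ℍ[ℝ]) := by
    nth_rewrite 1 [hz]
    rw [herm_exp', huz, hvz, ← Quaternion.coe_mul, ← Quaternion.coe_mul,
      ← Quaternion.coe_add]
    congr 1
    have h1 : Real.exp (t/2) * Real.exp (-t/2) = 1 := by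
      rw [← Real.exp_add]; rw [show t/2 + -t/2 = 0 by ring, Real.exp_zero]
    nlinarith [h1]
  have hww : herm w w = ((-2 : ℝ) : ℍ[ℝ]) := by
    nth_rewrite 1 [hw]
    have huw : herm u w = ((-Real.exp (-k/2) : ℝ) : ℍ[ℝ]) := by
      rw [herm_conj', hwu, Quaternion.star_coe]
    have hvw : herm v w = ((-Real.exp (k/2) : ℝ) : ℍ[ℝ]) := by
      rw [herm_conj', hwv, Quaternion.star_coe]
    rw [herm_exp', huw, hvw, ← Quaternion.coe_mul, ← Quaternion.coe_mul,
      ← Quaternion.coe_add]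
    congr 1
    have h1 : Real.exp (k/2) * Real.exp (-k/2) = 1 := by
      rw [← Real.exp_add]; rw [show k/2 + -k/2 = 0 by ring, Real.exp_zero]
    nlinarith [h1]
  have hwz : herm w z
      = ((-(Real.exp ((k-t)/2) + Real.exp ((t-k)/2)) : ℝ) : ℍ[ℝ]) := by
    rw [hw, herm_exp', huz, hvz, ← Quaternion.coe_mul, ← Quaternion.coe_mul,
      ← Quaternion.coe_add]
    congr 1
    rw [neg_mul, neg_mul, ← Real.exp_add, ← Real.exp_add,
      show -t/2 + k/2 = (k-t)/2 by ring, show t/2 + -k/2 = (t-k)/2 by ring]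
    ring
  have hzw : herm z w
      = ((-(Real.exp ((k-t)/2) + Real.exp ((t-k)/2)) : ℝ) : ℍ[ℝ]) := by
    rw [herm_conj', hwz, Quaternion.star_coe]
  have hX : crossX z u w v = ((1 + Real.exp (k - t) : ℝ) : ℍ[ℝ]) := by
    rw [crossX, hwz, hwu, hvu, hvz,
      show (-1 : ℍ[ℝ]) = ((-1 : ℝ) : ℍ[ℝ]) by push_cast; ring,
      ← Quaternion.coe_inv, ← Quaternion.coe_inv,
      ← Quaternion.coe_mul, ← Quaternion.coe_mul, ← Quaternion.coe_mul]
    congr 1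
    rw [show (-Real.exp (-k/2))⁻¹ = -Real.exp (k/2) by
        rw [inv_neg, show -k/2 = -(k/2) by ring, Real.exp_neg, inv_inv],
      show (-Real.exp (t/2))⁻¹ = -Real.exp (-t/2) by
        rw [inv_neg, show -t/2 = -(t/2) by ring, Real.exp_neg],
      show -t/2 = -(t/2) by ring]
    have h2 : Real.exp ((k-t)/2) * (Real.exp (k/2) * Real.exp (-(t/2)))
        = Real.exp (k-t) := by
      rw [← Real.exp_add, ← Real.exp_add, show (k-t)/2 + (k/2 + -(t/2)) = k-t by ring]
    have h3 : Real.exp ((t-k)/2) * (Real.exp (k/2) * Real.exp (-(t/2))) = 1 := by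
      rw [← Real.exp_add, ← Real.exp_add, show (t-k)/2 + (k/2 + -(t/2)) = 0 by ring,
        Real.exp_zero]
    nlinarith [h2, h3]
  have hA : Real.exp ((k-t)/2) + Real.exp ((t-k)/2)
      = Real.exp (|t-k|/2) + Real.exp (-(|t-k|/2)) := by
    rcases le_total k t with h | h
    · rw [abs_of_nonneg (by linarith : (0:ℝ) ≤ t - k),
        show -((t-k)/2) = (k-t)/2 by ring]
      ring
    · rw [abs_of_nonpos (by linarith : t - k ≤ 0),
        show -(t-k)/2 = (k-t)/2 by ring, show -((k-t)/2) = (t-k)/2 by ring]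
  have hApos : (0:ℝ) < Real.exp ((k-t)/2) + Real.exp ((t-k)/2) := by positivity
  have hrho : rho z w = |t - k| := by
    rw [rho, hzw, hzz, hww, Quaternion.norm_coe, Quaternion.re_coe,
      Real.norm_eq_abs, abs_neg, abs_of_pos hApos,
      show (Real.exp ((k-t)/2) + Real.exp ((t-k)/2))^2 / ((-2:ℝ) * (-2:ℝ))
        = ((Real.exp ((k-t)/2) + Real.exp ((t-k)/2))/2)^2 by ring,
      Real.sqrt_sq (by positivity), arcosh,
      show Real.exp ((k-t)/2) + Real.exp ((t-k)/2)
        = Real.exp (|t-k|/2) + Real.exp (-(|t-k|/2)) from hA,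
      arcosh_exp' (|t-k|/2) (by positivity)]
    ring
  refine ⟨hzz, hww, hX, hrho, ?_⟩
  rw [hX, show (1 : ℍ[ℝ]) = ((1 : ℝ) : ℍ[ℝ]) by push_cast; ring,
    ← Quaternion.coe_sub, Quaternion.re_coe,
    show (1 + Real.exp (k - t)) - 1 = Real.exp (k-t) by ring,
    Real.log_exp, abs_sub_comm]
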